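/- arXiv:math/0602175 — 2 statements merged into one kernel-verified Lean document; each statement's English description precedes it below -/
import Mathlib

section
/- Let H : E₁ → E₂ be a C¹ map between finite-dimensional normed spaces. Suppose there are sequences of invertible linear maps Aₙ : E₂ → E₂ and Bₙ : E₁ → E₁ and C¹ maps Hₙ : E₁ → E₂ with H = Aₙ⁻¹ ∘ Hₙ ∘ Bₙ, such that ‖DHₙ(Bₙ y) − DHₙ(0)‖ ≤ C ‖Bₙ‖^β ‖y‖^β for a fixed β ∈ (0,1] and C > 0, and ‖Aₙ⁻¹‖ · ‖Bₙ‖^{1+β} → 0 as n → ∞. Then DH(y) = DH(0) for all y; hence H is affine. -/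
open Filter

theorem renormalized_holder_implies_affine {E₁ E₂ : Type*}
    [NormedAddCommGroup E₁] [NormedSpace ℝ E₁] [FiniteDimensional ℝ E₁]
    [NormedAddCommGroup E₂] [NormedSpace ℝ E₂] [FiniteDimensional ℝ E₂]
    (H : E₁ → E₂) (hH : ContDiff ℝ 1 H)
    (A : ℕ → (E₂ ≃L[ℝ] E₂)) (B : ℕ → (E₁ ≃L[ℝ] E₁))
    (Hn : ℕ → E₁ → E₂) (hHn : ∀ n, ContDiff ℝ 1 (Hn n))
    (β C : ℝ) (hβ0 : 0 < β) (hβ1 : β ≤ 1) (hC : 0 < C)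
    (hconj : ∀ n y, H y = (A n).symm (Hn n (B n y)))
    (hHolder : ∀ n y, ‖fderiv ℝ (Hn n) (B n y) - fderiv ℝ (Hn n) 0‖ ≤
      C * ‖(B n : E₁ →L[ℝ] E₁)‖ ^ β * ‖y‖ ^ β)
    (hdecay : Tendsto
      (fun n => ‖((A n).symm : E₂ →L[ℝ] E₂)‖ * ‖(B n : E₁ →L[ℝ] E₁)‖ ^ (1 + β))
      atTop (nhds 0)) :
    ∀ y : E₁, fderiv ℝ H y = fderiv ℝ H 0 ∧ H y = H 0 + fderiv ℝ H 0 y := by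
  have hHd : Differentiable ℝ H := hH.differentiable one_ne_zero
  have hrep : ∀ n x, fderiv ℝ H x =
      (((A n).symm : E₂ →L[ℝ] E₂).comp (fderiv ℝ (Hn n) (B n x))).comp
        (B n : E₁ →L[ℝ] E₁) := by
    intro n x
    have hfun : H = (⇑(A n).symm) ∘ ((Hn n) ∘ ⇑(B n)) := by
      funext z; exact hconj n z
    rw [hfun, ContinuousLinearEquiv.comp_fderiv, (B n).comp_right_fderiv,
      ContinuousLinearMap.comp_assoc]
  have key : ∀ y, fderiv ℝ H y = fderiv ℝ H 0 := by
    intro y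
    have hbound : ∀ n, ‖fderiv ℝ H y - fderiv ℝ H 0‖ ≤
        C * (‖((A n).symm : E₂ →L[ℝ] E₂)‖ * ‖(B n : E₁ →L[ℝ] E₁)‖ ^ (1 + β)) * ‖y‖ ^ β := by
      intro n
      have hdiff : fderiv ℝ H y - fderiv ℝ H 0 =
          (((A n).symm : E₂ →L[ℝ] E₂).comp
            (fderiv ℝ (Hn n) (B n y) - fderiv ℝ (Hn n) 0)).comp
            (B n : E₁ →L[ℝ] E₁) := by
        rw [hrep n y, hrep n 0, map_zero]
        rw [ContinuousLinearMap.comp_sub, ContinuousLinearMap.sub_comp]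
      rw [hdiff]
      calc ‖(((A n).symm : E₂ →L[ℝ] E₂).comp
            (fderiv ℝ (Hn n) (B n y) - fderiv ℝ (Hn n) 0)).comp
            (B n : E₁ →L[ℝ] E₁)‖
          ≤ ‖((A n).symm : E₂ →L[ℝ] E₂).comp
              (fderiv ℝ (Hn n) (B n y) - fderiv ℝ (Hn n) 0)‖ *
            ‖(B n : E₁ →L[ℝ] E₁)‖ := ContinuousLinearMap.opNorm_comp_le _ _
        _ ≤ (‖((A n).symm : E₂ →L[ℝ] E₂)‖ *
              ‖fderiv ℝ (Hn n) (B n y) - fderiv ℝ (Hn n) 0‖) *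
            ‖(B n : E₁ →L[ℝ] E₁)‖ := by
            gcongr
            exact ContinuousLinearMap.opNorm_comp_le _ _
        _ ≤ (‖((A n).symm : E₂ →L[ℝ] E₂)‖ *
              (C * ‖(B n : E₁ →L[ℝ] E₁)‖ ^ β * ‖y‖ ^ β)) *
            ‖(B n : E₁ →L[ℝ] E₁)‖ := by
            gcongr
            exact hHolder n y
        _ = C * (‖((A n).symm : E₂ →L[ℝ] E₂)‖ * ‖(B n : E₁ →L[ℝ] E₁)‖ ^ (1 + β)) *
              ‖y‖ ^ β := by
            rw [Real.rpow_add' (norm_nonneg _) (by positivity)]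
            rw [Real.rpow_one]
            ring
    have hlim : Tendsto (fun n =>
        C * (‖((A n).symm : E₂ →L[ℝ] E₂)‖ * ‖(B n : E₁ →L[ℝ] E₁)‖ ^ (1 + β)) * ‖y‖ ^ β)
        atTop (nhds 0) := by
      have := (hdecay.const_mul C).mul_const (‖y‖ ^ β)
      simpa using this
    have hle : ‖fderiv ℝ H y - fderiv ℝ H 0‖ ≤ 0 :=
      le_of_tendsto_of_tendsto' tendsto_const_nhds hlim hbound
    have : fderiv ℝ H y - fderiv ℝ H 0 = 0 := by
      rw [← norm_le_zero_iff]; exact hle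
    exact sub_eq_zero.mp this
  intro y
  refine ⟨key y, ?_⟩
  set L := fderiv ℝ H 0 with hL
  have hg : ∀ x, fderiv ℝ (fun z => H z - L z) x = 0 := by
    intro x
    rw [fderiv_fun_sub (hHd x) (L.differentiableAt)]
    rw [L.fderiv, key x, sub_self]
  have hgd : Differentiable ℝ (fun z => H z - L z) := hHd.sub L.differentiable
  have := is_const_of_fderiv_eq_zero hgd hg y 0
  simp only [map_zero, sub_zero] at this
  exact sub_eq_iff_eq_add.mp this
end

section
/- Let f : X → X be a map of a metric space and E a continuous assignment of linear maps as in a cocycle: A(x,n) = Df^n along an invariant bundle. Suppose the cocycle is conformal with respect to a β-Hölder family of norms, the conformal factors c_x = ‖A(x,1)‖ satisfy the Hölder bound with constant C and lower bound m > 0, and points x, z satisfy d(fⁿx, fⁿz) ≤ K₁ λⁿ for all n ≥ 0 with 0 < λ < 1. Then there is K such that ‖A(z,n)⁻¹‖·‖A(x,n)‖ ≤ K for all n ≥ 0, where K = ∏_{i≥0}(1 + (C/m)(K₁λ^i)^β). -/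
/-- Lemma 4.8: for a conformal cocycle with β-Hölder conformal factors, forward
exponential closeness of orbits gives uniform comparability of cocycle norms. -/
theorem conformal_cocycle_comparability {X : Type*} [MetricSpace X]
    {E : Type*} [NormedAddCommGroup E] [NormedSpace ℝ E] [FiniteDimensional ℝ E]
    (f : X → X) (A : X → ℕ → (E ≃L[ℝ] E))
    (hcocycle : ∀ x n m, A x (n + m) = (A x n).trans (A (f^[n] x) m))
    (c : X → ℝ) (hconf : ∀ (x : X) (v : E), ‖A x 1 v‖ = c x * ‖v‖)
    (C m β : ℝ) (hβ0 : 0 < β) (hβ1 : β ≤ 1) (hm : 0 < m)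
    (hlow : ∀ x, m ≤ c x)
    (hHolder : ∀ x z : X, |c x - c z| ≤ C * dist x z ^ β)
    (x z : X) (K₁ l : ℝ) (hl0 : 0 < l) (hl1 : l < 1)
    (hclose : ∀ n : ℕ, dist (f^[n] x) (f^[n] z) ≤ K₁ * l ^ n) :
    ∃ K : ℝ, ∀ n : ℕ,
      ‖((A z n).symm : E →L[ℝ] E)‖ * ‖(A x n : E →L[ℝ] E)‖ ≤ K := by
  set C' := |C| with hC'
  have hC'0 : 0 ≤ C' := abs_nonneg C
  have hK₁ : 0 ≤ K₁ := by
    have h := hclose 0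
    simp only [Function.iterate_zero_apply, pow_zero, mul_one] at h
    exact le_trans dist_nonneg h
  -- the norm of the cocycle on a vector is the product of conformal factors
  have hnorm : ∀ (y : X) (n : ℕ) (v : E),
      ‖A y n v‖ = (∏ i ∈ Finset.range n, c (f^[i] y)) * ‖v‖ := by
    intro y n
    induction n with
    | zero =>
      intro v
      have h := hcocycle y 0 0
      simp only [Nat.add_zero] at h
      have h1 : A y 0 v = A y 0 (A y 0 v) := by
        conv_lhs => rw [h]
        rfl
      have h0 : v = A y 0 v := (A y 0).injective h1
      simp [← h0]
    | succ n ih =>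
      intro v
      have h := hcocycle y n 1
      have happ : A y (n + 1) v = A (f^[n] y) 1 (A y n v) := by rw [h]; rfl
      rw [happ, hconf, ih, Finset.prod_range_succ]
      ring
  -- positivity of the products
  have hm' : ∀ (y : X) (i : ℕ), 0 < c (f^[i] y) := fun y i => lt_of_lt_of_le hm (hlow _)
  have hPpos : ∀ (y : X) (n : ℕ), 0 < ∏ i ∈ Finset.range n, c (f^[i] y) := by
    intro y n
    exact Finset.prod_pos fun i _ => hm' y i
  -- abbreviations
  have hlβ0 : (0 : ℝ) < l ^ β := Real.rpow_pos_of_pos hl0 β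
  have hlβ1 : l ^ β < 1 := Real.rpow_lt_one hl0.le hl1 hβ0
  refine ⟨Real.exp (C' / m * (K₁ ^ β * (1 - l ^ β)⁻¹)), fun n => ?_⟩
  set Px := ∏ i ∈ Finset.range n, c (f^[i] x) with hPx
  set Pz := ∏ i ∈ Finset.range n, c (f^[i] z) with hPz
  have hPxpos := hPpos x n
  have hPzpos := hPpos z n
  -- operator norm bounds
  have hAx : ‖(A x n : E →L[ℝ] E)‖ ≤ Px := by
    apply ContinuousLinearMap.opNorm_le_bound _ hPxpos.le
    intro v
    exact le_of_eq (hnorm x n v)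
  have hAz : ‖((A z n).symm : E →L[ℝ] E)‖ ≤ Pz⁻¹ := by
    apply ContinuousLinearMap.opNorm_le_bound _ (inv_nonneg.mpr hPzpos.le)
    intro w
    have h1 : ‖A z n ((A z n).symm w)‖ = Pz * ‖(A z n).symm w‖ := hnorm z n _
    rw [(A z n).apply_symm_apply] at h1
    have : ‖((A z n).symm : E →L[ℝ] E) w‖ = Pz⁻¹ * ‖w‖ := by
      field_simp [h1]
      rw [h1, mul_div_cancel_left₀ _ (show Pz ≠ 0 from hPzpos.ne')] <;> rfl
    rw [this]
  have hmul : ‖((A z n).symm : E →L[ℝ] E)‖ * ‖(A x n : E →L[ℝ] E)‖ ≤ Pz⁻¹ * Px :=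
    mul_le_mul hAz hAx (norm_nonneg _) (inv_nonneg.mpr hPzpos.le)
  -- the ratio of products
  have hratio : Pz⁻¹ * Px = ∏ i ∈ Finset.range n, (c (f^[i] x) / c (f^[i] z)) := by
    rw [Finset.prod_div_distrib, ← hPx, ← hPz, div_eq_mul_inv, mul_comm]
  -- termwise bound
  have hterm : ∀ i ∈ Finset.range n,
      c (f^[i] x) / c (f^[i] z) ≤ 1 + C' / m * (K₁ * l ^ i) ^ β := by
    intro i _
    have hzpos := hm' z i
    have hd : dist (f^[i] x) (f^[i] z) ^ β ≤ (K₁ * l ^ i) ^ β :=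
      Real.rpow_le_rpow dist_nonneg (hclose i) hβ0.le
    have hdb0 : (0 : ℝ) ≤ dist (f^[i] x) (f^[i] z) ^ β := Real.rpow_nonneg dist_nonneg β
    have hKl0 : (0 : ℝ) ≤ (K₁ * l ^ i) ^ β :=
      Real.rpow_nonneg (mul_nonneg hK₁ (pow_nonneg hl0.le i)) β
    have hnum : c (f^[i] x) ≤ c (f^[i] z) + C' * (K₁ * l ^ i) ^ β := by
      have h1 : c (f^[i] x) - c (f^[i] z) ≤ C * dist (f^[i] x) (f^[i] z) ^ β :=
        le_trans (le_abs_self _) (hHolder _ _)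
      have h2 : C * dist (f^[i] x) (f^[i] z) ^ β ≤ C' * dist (f^[i] x) (f^[i] z) ^ β :=
        mul_le_mul_of_nonneg_right (le_abs_self C) hdb0
      have h3 : C' * dist (f^[i] x) (f^[i] z) ^ β ≤ C' * (K₁ * l ^ i) ^ β :=
        mul_le_mul_of_nonneg_left hd hC'0
      linarith
    have hdiv : c (f^[i] x) / c (f^[i] z)
        ≤ 1 + C' * (K₁ * l ^ i) ^ β / c (f^[i] z) := by
      rw [div_le_iff₀ hzpos]
      have : (1 + C' * (K₁ * l ^ i) ^ β / c (f^[i] z)) * c (f^[i] z)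
          = c (f^[i] z) + C' * (K₁ * l ^ i) ^ β := by
        field_simp
      rw [this]
      exact hnum
    have hdiv2 : C' * (K₁ * l ^ i) ^ β / c (f^[i] z) ≤ C' * (K₁ * l ^ i) ^ β / m :=
      div_le_div_of_nonneg_left (mul_nonneg hC'0 hKl0) hm (hlow _) |>.trans_eq rfl
    calc c (f^[i] x) / c (f^[i] z) ≤ 1 + C' * (K₁ * l ^ i) ^ β / c (f^[i] z) := hdiv
      _ ≤ 1 + C' * (K₁ * l ^ i) ^ β / m := by linarith
      _ = 1 + C' / m * (K₁ * l ^ i) ^ β := by ring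
  -- product ≤ exp of the sum
  have hKl0 : ∀ i : ℕ, (0 : ℝ) ≤ C' / m * (K₁ * l ^ i) ^ β := fun i =>
    mul_nonneg (div_nonneg hC'0 hm.le)
      (Real.rpow_nonneg (mul_nonneg hK₁ (pow_nonneg hl0.le i)) β)
  have hprod_le : (∏ i ∈ Finset.range n, (c (f^[i] x) / c (f^[i] z)))
      ≤ ∏ i ∈ Finset.range n, Real.exp (C' / m * (K₁ * l ^ i) ^ β) := by
    apply Finset.prod_le_prod
    · intro i _
      exact div_nonneg (hm' x i).le (hm' z i).le
    · intro i hi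
      calc c (f^[i] x) / c (f^[i] z) ≤ 1 + C' / m * (K₁ * l ^ i) ^ β := hterm i hi
        _ ≤ Real.exp (C' / m * (K₁ * l ^ i) ^ β) := by
            have := Real.add_one_le_exp (C' / m * (K₁ * l ^ i) ^ β)
            linarith
  rw [← Real.exp_sum] at hprod_le
  -- bound the sum by the geometric series
  have hsum : (∑ i ∈ Finset.range n, C' / m * (K₁ * l ^ i) ^ β)
      ≤ C' / m * (K₁ ^ β * (1 - l ^ β)⁻¹) := by
    have hterm_eq : ∀ i : ℕ, (K₁ * l ^ i) ^ β = K₁ ^ β * (l ^ β) ^ i := by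
      intro i
      rw [Real.mul_rpow hK₁ (pow_nonneg hl0.le i), ← Real.rpow_natCast l i,
        ← Real.rpow_natCast (l ^ β) i, ← Real.rpow_mul hl0.le, ← Real.rpow_mul hl0.le,
        mul_comm (i : ℝ) β]
    have hgeom : (∑ i ∈ Finset.range n, (l ^ β) ^ i) ≤ (1 - l ^ β)⁻¹ := by
      have hsummable := (hasSum_geometric_of_lt_one hlβ0.le hlβ1)
      calc (∑ i ∈ Finset.range n, (l ^ β) ^ i) ≤ ∑' i : ℕ, (l ^ β) ^ i :=
            Summable.sum_le_tsum (Finset.range n) (fun i _ => pow_nonneg hlβ0.le i)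
              hsummable.summable
        _ = (1 - l ^ β)⁻¹ := hsummable.tsum_eq
    calc (∑ i ∈ Finset.range n, C' / m * (K₁ * l ^ i) ^ β)
        = C' / m * (K₁ ^ β * ∑ i ∈ Finset.range n, (l ^ β) ^ i) := by
          rw [Finset.mul_sum]
          congr 1
          rw [Finset.mul_sum]
          exact Finset.sum_congr rfl fun i _ => by rw [hterm_eq i]
      _ ≤ C' / m * (K₁ ^ β * (1 - l ^ β)⁻¹) := by
          apply mul_le_mul_of_nonneg_left _ (div_nonneg hC'0 hm.le)
          exact mul_le_mul_of_nonneg_left hgeom (Real.rpow_nonneg hK₁ β)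
  calc ‖((A z n).symm : E →L[ℝ] E)‖ * ‖(A x n : E →L[ℝ] E)‖
      ≤ Pz⁻¹ * Px := hmul
    _ = ∏ i ∈ Finset.range n, (c (f^[i] x) / c (f^[i] z)) := hratio
    _ ≤ Real.exp (∑ i ∈ Finset.range n, C' / m * (K₁ * l ^ i) ^ β) := hprod_le
    _ ≤ Real.exp (C' / m * (K₁ ^ β * (1 - l ^ β)⁻¹)) := Real.exp_le_exp.mpr hsum
end
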